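/- Let E be a finite-dimensional real inner product space, C ⊆ E a convex set, f : E → ℝ convex and twice continuously differentiable on C, R : E → ℝ convex, F = f + R, and x* ∈ C a minimizer of F over C. Suppose there are 0 < α ≤ β such that α‖h‖² ≤ ⟨∇²f(u)h, h⟩ ≤ β‖h‖² for all u ∈ C and h ∈ E. Let x ∈ C, η > 0, C_A ≥ 0, and let v ∈ C satisfy φ_{x,η}(v) ≤ φ_{x,η}(x*) + η²·C_A·‖x − x*‖³. Then ‖v − x*‖ ≤ (β/α)(3 + 2/η)·‖x − x*‖ + (η·C_A/α)·‖x − x*‖². -/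

import Mathlib

open RealInnerProductSpace

section AUX

variable {E : Type*} [NormedAddCommGroup E] [InnerProductSpace ℝ E]

lemma aux_bilin {α β : ℝ} (H : E →L[ℝ] E) (hα : 0 < α) (hαβ : α ≤ β)
    (hH : ∀ h : E, α * ‖h‖ ^ 2 ≤ ⟪H h, h⟫ ∧ ⟪H h, h⟫ ≤ β * ‖h‖ ^ 2)
    (w z : E) : ⟪H w, z⟫ + ⟪H z, w⟫ ≤ 2 * β * (‖w‖ * ‖z‖) := by
  have hβ : 0 < β := lt_of_lt_of_le hα hαβ
  have key : ∀ u y : E, ⟪H u, y⟫ + ⟪H y, u⟫ ≤ (β / 2) * (‖u‖ + ‖y‖) ^ 2 := by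
    intro u y
    have e1 : ⟪H (u + y), u + y⟫ - ⟪H (u - y), u - y⟫ = 2 * (⟪H u, y⟫ + ⟪H y, u⟫) := by
      simp only [map_add, map_sub, inner_add_left, inner_add_right, inner_sub_left,
        inner_sub_right]
      ring
    have h1 := (hH (u + y)).2
    have h2 := (hH (u - y)).1
    have h3 : ‖u + y‖ ≤ ‖u‖ + ‖y‖ := norm_add_le u y
    have h4 : β * ‖u + y‖ ^ 2 ≤ β * (‖u‖ + ‖y‖) ^ 2 := by
      have := pow_le_pow_left₀ (norm_nonneg (u + y)) h3 2
      nlinarith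
    have h5 : 0 ≤ α * ‖u - y‖ ^ 2 := by positivity
    linarith
  by_cases hw : w = 0
  · simp [hw]
  by_cases hz : z = 0
  · simp [hz]
  have hwn : 0 < ‖w‖ := norm_pos_iff.mpr hw
  have hzn : 0 < ‖z‖ := norm_pos_iff.mpr hz
  set s : ℝ := Real.sqrt (‖w‖ * ‖z‖) with hs
  have hs2 : s ^ 2 = ‖w‖ * ‖z‖ := Real.sq_sqrt (by positivity)
  have hspos : 0 < s := Real.sqrt_pos.mpr (by positivity)
  have hK := key ((s / ‖w‖) • w) ((s / ‖z‖) • z)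
  simp only [map_smul, real_inner_smul_left, real_inner_smul_right, norm_smul,
    Real.norm_eq_abs] at hK
  rw [abs_of_pos (by positivity), abs_of_pos (by positivity), div_mul_cancel₀ _ hwn.ne',
    div_mul_cancel₀ _ hzn.ne'] at hK
  have hc : s / ‖w‖ * (s / ‖z‖) = 1 := by
    field_simp
    exact hs2
  have hrw : ∀ A B : ℝ, s / ‖z‖ * (s / ‖w‖ * A) + s / ‖w‖ * (s / ‖z‖ * B) = A + B := by
    intro A B; linear_combination (A + B) * hc
  rw [hrw] at hK
  have : (β / 2) * (s + s) ^ 2 = 2 * β * (‖w‖ * ‖z‖) := by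
    rw [← hs2]; ring
  linarith

end AUX
section AUX2

variable {E : Type*} [NormedAddCommGroup E] [InnerProductSpace ℝ E] [CompleteSpace E]

lemma aux_grad_ne_diff (f : E → ℝ) (u : E) (hne : gradient f u ≠ 0) :
    DifferentiableAt ℝ f u := by
  by_contra hcon
  exact hne (by unfold gradient; rw [fderiv_zero_of_not_differentiableAt hcon]; simp)

lemma aux_sym (f : E → ℝ) (u : E) (hdiff : DifferentiableAt ℝ (gradient f) u)
    (hne : gradient f u ≠ 0) (w z : E) :
    ⟪(fderiv ℝ (gradient f) u) w, z⟫ = ⟪(fderiv ℝ (gradient f) u) z, w⟫ := by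
  have hev : ∀ᶠ y in nhds u, gradient f y ≠ 0 := hdiff.continuousAt.eventually_ne hne
  have hf' : ∀ᶠ y in nhds u,
      HasFDerivAt f ((InnerProductSpace.toDual ℝ E) (gradient f y)) y := by
    filter_upwards [hev] with y hy
    exact (aux_grad_ne_diff f y hy).hasGradientAt.hasFDerivAt
  set T : E →L[ℝ] (E →L[ℝ] ℝ) :=
    ((InnerProductSpace.toDual ℝ E).toContinuousLinearEquiv :
      E ≃L[ℝ] (E →L[ℝ] ℝ)).toContinuousLinearMap with hT
  have hcomp : HasFDerivAt (fun y => (InnerProductSpace.toDual ℝ E) (gradient f y))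
      (T.comp (fderiv ℝ (gradient f) u)) u := by
    have := T.hasFDerivAt.comp u hdiff.hasFDerivAt
    exact this
  have hsym := second_derivative_symmetric_of_eventually hf' hcomp w z
  simpa [T, InnerProductSpace.toDual_apply_apply] using hsym

end AUX2

set_option maxHeartbeats 1000000 in
/-- Lemma bounding the distance of a WPNO output from `x*`:
if `φ_{x,η}(v) ≤ φ_{x,η}(x*) + η²·C_A·‖x − x*‖³`, then
`‖v − x*‖ ≤ (β/α)(3 + 2/η)·‖x − x*‖ + (η·C_A/α)·‖x − x*‖²`. -/
theorem stmt_1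
    {E : Type*} [NormedAddCommGroup E] [InnerProductSpace ℝ E] [FiniteDimensional ℝ E]
    (C : Set E) (hC : Convex ℝ C)
    (f R : E → ℝ)
    (hfconv : ConvexOn ℝ C f)
    (hf2 : ContDiffOn ℝ 2 f C)
    (hR : ConvexOn ℝ Set.univ R)
    (F : E → ℝ) (hF : ∀ u, F u = f u + R u)
    (xs : E) (hxs : xs ∈ C) (hmin : ∀ u ∈ C, F xs ≤ F u)
    (α β : ℝ) (hα : 0 < α) (hαβ : α ≤ β)
    (hHess : ∀ u ∈ C, ∀ h : E,
      α * ‖h‖ ^ 2 ≤ ⟪(fderiv ℝ (gradient f) u) h, h⟫ ∧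
      ⟪(fderiv ℝ (gradient f) u) h, h⟫ ≤ β * ‖h‖ ^ 2)
    (x : E) (hx : x ∈ C) (η : ℝ) (hη : 0 < η) (CA : ℝ) (hCA : 0 ≤ CA)
    (φ : E → ℝ)
    (hφ : ∀ w, φ w =
      ⟪gradient f x, w - x⟫
        + (η / 2) * ⟪(fderiv ℝ (gradient f) x) (w - x), w - x⟫ + R w)
    (v : E) (hv : v ∈ C)
    (hvp : φ v ≤ φ xs + η ^ 2 * CA * ‖x - xs‖ ^ 3) :
    ‖v - xs‖ ≤ (β / α) * (3 + 2 / η) * ‖x - xs‖ + (η * CA / α) * ‖x - xs‖ ^ 2 := by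
  have hβ : 0 < β := lt_of_lt_of_le hα hαβ
  have hRHS : 0 ≤ (β / α) * (3 + 2 / η) * ‖x - xs‖ + (η * CA / α) * ‖x - xs‖ ^ 2 := by
    have h1 : 0 ≤ β / α := (div_pos hβ hα).le
    have h2 : (0:ℝ) ≤ 3 + 2 / η := by positivity
    have h3 : 0 ≤ η * CA / α := by positivity
    positivity
  -- trivial case v = xs
  by_cases hd0 : v = xs
  · rw [hd0]; simpa using hRHS
  have hDpos : 0 < ‖v - xs‖ := norm_pos_iff.mpr (sub_ne_zero_of_ne hd0)
  -- nontriviality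
  rcases subsingleton_or_nontrivial E with hE | hE
  · exact absurd (Subsingleton.elim v xs) hd0
  -- gradient is differentiable on C
  have hGdiff : ∀ u ∈ C, DifferentiableAt ℝ (gradient f) u := by
    intro u hu
    by_contra hcon
    obtain ⟨e0, he0⟩ := exists_ne (0 : E)
    have h1 := (hHess u hu e0).1
    rw [fderiv_zero_of_not_differentiableAt hcon] at h1
    simp only [ContinuousLinearMap.zero_apply, inner_zero_left] at h1
    have hp : 0 < ‖e0‖ := norm_pos_iff.mpr he0
    nlinarith [mul_pos hp hp]
  have hHlower : ∀ u ∈ C, ∀ h : E, α * ‖h‖ ≤ ‖(fderiv ℝ (gradient f) u) h‖ := by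
    intro u hu h
    rcases eq_or_ne h 0 with rfl | hh
    · simp
    · have h1 := (hHess u hu h).1
      have h2 := real_inner_le_norm ((fderiv ℝ (gradient f) u) h) h
      have hhn : 0 < ‖h‖ := norm_pos_iff.mpr hh
      nlinarith
  -- membership of the segment from xs to v
  have hmemseg : ∀ s ∈ Set.Icc (0:ℝ) 1, xs + s • (v - xs) ∈ C := by
    intro s hs
    have h := hC hxs hv (by linarith [hs.2] : (0:ℝ) ≤ 1 - s) hs.1 (by ring)
    convert h using 1
    module
  -- membership of the segment from x to xs
  have hmemseg2 : ∀ s ∈ Set.Icc (0:ℝ) 1, x + s • (xs - x) ∈ C := by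
    intro s hs
    have h := hC hx hxs (by linarith [hs.2] : (0:ℝ) ≤ 1 - s) hs.1 (by ring)
    convert h using 1
    module
  -- first-order optimality at xs
  have OPT : -(R v - R xs) ≤ ⟪gradient f xs, v - xs⟫ := by
    refine le_of_forall_pos_le_add (fun ε hε => ?_)
    have hδg : 0 < ε / ‖v - xs‖ := div_pos hε hDpos
    have hGc : ContinuousAt (gradient f) xs := (hGdiff xs hxs).continuousAt
    obtain ⟨δ1, hδ1pos, hδ1⟩ := Metric.continuousAt_iff.mp hGc _ hδg
    have hnonv : ∃ δ2 > 0, ∀ s : ℝ, 0 < s → s < δ2 →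
        gradient f (xs + s • (v - xs)) ≠ 0 := by
      by_cases hGxs : gradient f xs = 0
      · have hfd := (hGdiff xs hxs).hasFDerivAt
        have hlo := Asymptotics.isLittleO_iff.mp hfd.isLittleO (half_pos hα)
        rw [Metric.eventually_nhds_iff] at hlo
        obtain ⟨δ2, hδ2pos, hb⟩ := hlo
        refine ⟨δ2 / ‖v - xs‖, by positivity, fun s hs hsδ => ?_⟩
        have hsd : ‖s • (v - xs)‖ = s * ‖v - xs‖ := by
          rw [norm_smul, Real.norm_eq_abs, abs_of_pos hs]
        have hdist : dist (xs + s • (v - xs)) xs < δ2 := by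
          rw [dist_eq_norm]
          simp only [add_sub_cancel_left]
          rw [hsd]
          calc s * ‖v - xs‖ < (δ2 / ‖v - xs‖) * ‖v - xs‖ :=
                mul_lt_mul_of_pos_right hsδ hDpos
            _ = δ2 := div_mul_cancel₀ _ hDpos.ne'
        have hb' := hb hdist
        intro h0
        rw [h0, hGxs] at hb'
        simp only [zero_sub, add_sub_cancel_left, sub_zero, zero_sub, norm_neg] at hb'
        have hlow := hHlower xs hxs (s • (v - xs))
        have hNpos : 0 < ‖s • (v - xs)‖ := by rw [hsd]; positivity
        nlinarith [hb', hlow, hNpos]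
      · have hpos : 0 < ‖gradient f xs‖ := norm_pos_iff.mpr hGxs
        obtain ⟨δ2, hδ2pos, hδ2⟩ := Metric.continuousAt_iff.mp hGc _ hpos
        refine ⟨δ2 / ‖v - xs‖, by positivity, fun s hs hsδ => fun h0 => ?_⟩
        have hdist : dist (xs + s • (v - xs)) xs < δ2 := by
          rw [dist_eq_norm]
          simp only [add_sub_cancel_left]
          rw [norm_smul, Real.norm_eq_abs, abs_of_pos hs]
          calc s * ‖v - xs‖ < (δ2 / ‖v - xs‖) * ‖v - xs‖ :=
                mul_lt_mul_of_pos_right hsδ hDpos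
            _ = δ2 := div_mul_cancel₀ _ hDpos.ne'
        have := hδ2 hdist
        rw [h0, dist_zero_left] at this
        exact lt_irrefl _ this
    obtain ⟨δ2, hδ2pos, hδ2⟩ := hnonv
    obtain ⟨t, ht0, ht1, htδ1, htδ2⟩ : ∃ t : ℝ, 0 < t ∧ t ≤ 1 ∧ t * ‖v - xs‖ < δ1 ∧ t < δ2 := by
      refine ⟨min (min (δ1 / (2 * ‖v - xs‖)) (δ2 / 2)) 1, by positivity,
        min_le_right _ _, ?_, ?_⟩
      · have h1 : min (min (δ1 / (2 * ‖v - xs‖)) (δ2 / 2)) 1 ≤ δ1 / (2 * ‖v - xs‖) :=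
          le_trans (min_le_left _ _) (min_le_left _ _)
        calc min (min (δ1 / (2 * ‖v - xs‖)) (δ2 / 2)) 1 * ‖v - xs‖
            ≤ (δ1 / (2 * ‖v - xs‖)) * ‖v - xs‖ := mul_le_mul_of_nonneg_right h1 (norm_nonneg _)
          _ = δ1 / 2 := by
              field_simp
          _ < δ1 := by linarith
      · have h1 : min (min (δ1 / (2 * ‖v - xs‖)) (δ2 / 2)) 1 ≤ δ2 / 2 :=
          le_trans (min_le_left _ _) (min_le_right _ _)
        linarith
    have hψd : ∀ s : ℝ, 0 < s → s < δ2 → HasDerivAt (fun r : ℝ => f (xs + r • (v - xs)))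
        ⟪gradient f (xs + s • (v - xs)), v - xs⟫ s := by
      intro s hs hsδ
      have hfd : DifferentiableAt ℝ f (xs + s • (v - xs)) :=
        aux_grad_ne_diff f _ (hδ2 s hs hsδ)
      have hFd := hfd.hasGradientAt.hasFDerivAt
      have hpath : HasDerivAt (fun r : ℝ => xs + r • (v - xs)) (v - xs) s := by
        simpa using (((hasDerivAt_id s).smul_const (v - xs)).const_add xs)
      have := hFd.comp_hasDerivAt s hpath
      simpa [Function.comp_def] using this
    set M := ⟪gradient f xs, v - xs⟫ + ε with hM
    have hderiv_le : ∀ s : ℝ, 0 < s → s ≤ t →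
        ⟪gradient f (xs + s • (v - xs)), v - xs⟫ ≤ M := by
      intro s hs hst
      have hdist : dist (xs + s • (v - xs)) xs < δ1 := by
        rw [dist_eq_norm]
        simp only [add_sub_cancel_left]
        rw [norm_smul, Real.norm_eq_abs, abs_of_pos hs]
        have h2 : s * ‖v - xs‖ ≤ t * ‖v - xs‖ := mul_le_mul_of_nonneg_right hst (norm_nonneg _)
        linarith
      have hd1 := hδ1 hdist
      rw [dist_eq_norm] at hd1
      have hcs := real_inner_le_norm (gradient f (xs + s • (v - xs)) - gradient f xs) (v - xs)
      have hsplit : ⟪gradient f (xs + s • (v - xs)), v - xs⟫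
          = ⟪gradient f xs, v - xs⟫
            + ⟪gradient f (xs + s • (v - xs)) - gradient f xs, v - xs⟫ := by
        rw [inner_sub_left]; ring
      have hmul : ‖gradient f (xs + s • (v - xs)) - gradient f xs‖ * ‖v - xs‖ ≤ ε := by
        have h3 := mul_le_mul_of_nonneg_right hd1.le (norm_nonneg (v - xs))
        calc ‖gradient f (xs + s • (v - xs)) - gradient f xs‖ * ‖v - xs‖
            ≤ (ε / ‖v - xs‖) * ‖v - xs‖ := h3
          _ = ε := div_mul_cancel₀ _ hDpos.ne'
      rw [hsplit, hM]
      linarith [hcs, hmul]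
    have hmono : ∀ s0 : ℝ, 0 < s0 → s0 < t →
        f (xs + t • (v - xs)) - f (xs + s0 • (v - xs)) ≤ M * (t - s0) := by
      intro s0 hs0 hs0t
      have hsub' : ∀ r : ℝ, r ∈ Set.Icc s0 t → 0 < r ∧ r < δ2 :=
        fun r hr => ⟨lt_of_lt_of_le hs0 hr.1, lt_of_le_of_lt hr.2 htδ2⟩
      have hχd : ∀ r : ℝ, r ∈ Set.Icc s0 t →
          HasDerivAt (fun r => M * r - f (xs + r • (v - xs)))
            (M - ⟪gradient f (xs + r • (v - xs)), v - xs⟫) r := by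
        intro r hr
        have h1 : HasDerivAt (fun r : ℝ => M * r) M r := by
          simpa using (hasDerivAt_id r).const_mul M
        exact h1.sub (hψd r (hsub' r hr).1 (hsub' r hr).2)
      have hmono' : MonotoneOn (fun r => M * r - f (xs + r • (v - xs))) (Set.Icc s0 t) := by
        apply monotoneOn_of_deriv_nonneg (convex_Icc s0 t)
        · exact fun r hr => (hχd r hr).continuousAt.continuousWithinAt
        · intro r hr
          rw [interior_Icc] at hr
          exact (hχd r (Set.Ioo_subset_Icc_self hr)).differentiableAt.differentiableWithinAt
        · intro r hr
          rw [interior_Icc] at hr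
          rw [(hχd r (Set.Ioo_subset_Icc_self hr)).deriv]
          have := hderiv_le r (hsub' r (Set.Ioo_subset_Icc_self hr)).1
            (Set.Ioo_subset_Icc_self hr).2
          linarith
      have h2 := hmono' (Set.left_mem_Icc.mpr hs0t.le) (Set.right_mem_Icc.mpr hs0t.le) hs0t.le
      simp only at h2
      linarith
    have hψt : f (xs + t • (v - xs)) - f xs ≤ M * t := by
      have hc1 : ContinuousWithinAt f C (xs + (0:ℝ) • (v - xs)) := by
        simpa using hf2.continuousOn.continuousWithinAt hxs
      have hmaps : Set.MapsTo (fun r : ℝ => xs + r • (v - xs)) (Set.Icc 0 1) C :=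
        fun r hr => hmemseg r hr
      have hpc0 : ContinuousWithinAt (fun r : ℝ => xs + r • (v - xs)) (Set.Icc 0 1) 0 :=
        (continuous_const.add (continuous_id.smul continuous_const)).continuousWithinAt
      have hpathcont : ContinuousWithinAt (fun r : ℝ => f (xs + r • (v - xs)))
          (Set.Icc 0 1) 0 :=
        ContinuousWithinAt.comp (g := f) (f := fun r : ℝ => xs + r • (v - xs)) hc1 hpc0 hmaps
      have hne : (nhdsWithin (0:ℝ) (Set.Ioo 0 t)).NeBot := by
        rw [nhdsWithin_Ioo_eq_nhdsGT ht0]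
        infer_instance
      have htend1 : Filter.Tendsto (fun s0 : ℝ => f (xs + s0 • (v - xs)))
          (nhdsWithin 0 (Set.Ioo 0 t)) (nhds (f xs)) := by
        have h := hpathcont.tendsto
        simp only [zero_smul, add_zero] at h
        exact h.mono_left (nhdsWithin_mono _ (fun r hr => ⟨hr.1.le, le_trans hr.2.le ht1⟩))
      have htend2 : Filter.Tendsto (fun s0 : ℝ => f (xs + t • (v - xs)) - M * (t - s0))
          (nhdsWithin 0 (Set.Ioo 0 t)) (nhds (f (xs + t • (v - xs)) - M * t)) := by
        have hcont : Continuous (fun s0 : ℝ => f (xs + t • (v - xs)) - M * (t - s0)) := by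
          continuity
        have h := (hcont.tendsto 0).mono_left
          (nhdsWithin_le_nhds (s := Set.Ioo (0:ℝ) t))
        simpa using h
      have hev : ∀ᶠ s0 in nhdsWithin (0:ℝ) (Set.Ioo 0 t),
          f (xs + t • (v - xs)) - M * (t - s0) ≤ f (xs + s0 • (v - xs)) := by
        filter_upwards [self_mem_nhdsWithin] with s0 hs0
        have := hmono s0 hs0.1 hs0.2
        linarith
      have := le_of_tendsto_of_tendsto htend2 htend1 hev
      linarith
    have hwC : xs + t • (v - xs) ∈ C := hmemseg t ⟨ht0.le, ht1⟩
    have hFmin := hmin _ hwC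
    rw [hF xs, hF (xs + t • (v - xs))] at hFmin
    have hRconv : R (xs + t • (v - xs)) ≤ (1 - t) * R xs + t * R v := by
      have harg : (1 - t) • xs + t • v = xs + t • (v - xs) := by module
      have h := hR.2 (Set.mem_univ xs) (Set.mem_univ v)
        (show (0:ℝ) ≤ 1 - t by linarith) (show (0:ℝ) ≤ t from ht0.le)
        (show (1 - t) + t = 1 by ring)
      rw [harg] at h
      simpa using h
    have ht' : 0 ≤ M * t + t * (R v - R xs) := by linarith
    nlinarith [ht', ht0]
  -- quasi-Lipschitz bound for the gradient along the segment
  have GRADLIP : ⟪gradient f xs, v - xs⟫ - ⟪gradient f x, v - xs⟫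
      ≤ β * (‖x - xs‖ * ‖v - xs‖) := by
    rcases eq_or_ne xs x with hxx | hxx
    · rw [hxx]; simp
    have hBe : ‖xs - x‖ = ‖x - xs‖ := norm_sub_rev _ _
    have hepos : 0 < ‖xs - x‖ := norm_pos_iff.mpr (sub_ne_zero_of_ne hxx)
    set c : ℝ → E := fun s => x + s • (xs - x) with hcdef
    have hpathc : ∀ s : ℝ, HasDerivAt c (xs - x) s := by
      intro s
      simpa [hcdef] using (((hasDerivAt_id s).smul_const (xs - x)).const_add x)
    have hm : ∀ (w : E), ∀ s ∈ Set.Icc (0:ℝ) 1,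
        HasDerivAt (fun r => ⟪w, gradient f (c r)⟫)
          ⟪w, (fderiv ℝ (gradient f) (c s)) (xs - x)⟫ s := by
      intro w s hs
      have hdG := (hGdiff (c s) (hmemseg2 s hs)).hasFDerivAt
      have hcomp := hdG.comp_hasDerivAt s (hpathc s)
      have h2 := (innerSL ℝ w).hasFDerivAt.comp_hasDerivAt s hcomp
      simpa [Function.comp_def] using h2
    -- the gradient can vanish at most at one point of the segment
    have hq : ∀ a b : ℝ, a ∈ Set.Icc (0:ℝ) 1 → b ∈ Set.Icc (0:ℝ) 1 → a < b →
        gradient f (c a) = 0 → gradient f (c b) = 0 → False := by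
      intro a b ha hb hab hga hgb
      have hsub : Set.Icc a b ⊆ Set.Icc (0:ℝ) 1 := Set.Icc_subset_Icc ha.1 hb.2
      have hmono : StrictMonoOn (fun r => ⟪xs - x, gradient f (c r)⟫) (Set.Icc a b) := by
        apply strictMonoOn_of_deriv_pos (convex_Icc a b)
        · exact fun r hr => (hm (xs - x) r (hsub hr)).continuousAt.continuousWithinAt
        · intro r hr
          rw [interior_Icc] at hr
          have hr' := hsub (Set.Ioo_subset_Icc_self hr)
          rw [(hm (xs - x) r hr').deriv]
          have h1 := (hHess (c r) (hmemseg2 r hr') (xs - x)).1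
          have h2 : ⟪xs - x, (fderiv ℝ (gradient f) (c r)) (xs - x)⟫
              = ⟪(fderiv ℝ (gradient f) (c r)) (xs - x), xs - x⟫ := real_inner_comm _ _
          rw [h2]
          nlinarith [mul_pos hepos hepos]
      have hlt := hmono (Set.left_mem_Icc.mpr hab.le) (Set.right_mem_Icc.mpr hab.le) hab
      simp only [hga, hgb, inner_zero_right] at hlt
      exact lt_irrefl _ hlt
    obtain ⟨t₀, ht₀mem, ht₀⟩ : ∃ t₀ ∈ Set.Icc (0:ℝ) 1,
        ∀ s ∈ Set.Icc (0:ℝ) 1, gradient f (c s) = 0 → s = t₀ := by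
      by_cases hT : ∃ s ∈ Set.Icc (0:ℝ) 1, gradient f (c s) = 0
      · obtain ⟨t₀, h1, h2⟩ := hT
        refine ⟨t₀, h1, fun s hs hGs => ?_⟩
        by_contra hne
        rcases lt_or_gt_of_ne hne with h | h
        · exact hq s t₀ hs h1 h hGs h2
        · exact hq t₀ s h1 hs h h2 hGs
      · push_neg at hT
        exact ⟨0, by norm_num, fun s hs hGs => absurd hGs (hT s hs)⟩
    set K := β * (‖xs - x‖ * ‖v - xs‖) with hKdef
    have hderiv_bound : ∀ r ∈ Set.Icc (0:ℝ) 1, r ≠ t₀ →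
        ⟪v - xs, (fderiv ℝ (gradient f) (c r)) (xs - x)⟫ ≤ K := by
      intro r hr hrne
      have hGne : gradient f (c r) ≠ 0 := fun h0 => hrne (ht₀ r hr h0)
      have hsym := aux_sym f (c r) (hGdiff _ (hmemseg2 r hr)) hGne (v - xs) (xs - x)
      have hb := aux_bilin (fderiv ℝ (gradient f) (c r)) hα hαβ (hHess _ (hmemseg2 r hr))
        (xs - x) (v - xs)
      rw [← hsym] at hb
      have hcomm : ⟪v - xs, (fderiv ℝ (gradient f) (c r)) (xs - x)⟫
          = ⟪(fderiv ℝ (gradient f) (c r)) (v - xs), xs - x⟫ := by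
        rw [real_inner_comm, hsym]
      rw [hcomm, hKdef]
      linarith [hb]
    have hseg : ∀ a b : ℝ, 0 ≤ a → b ≤ 1 → a ≤ b → (∀ r ∈ Set.Ioo a b, r ≠ t₀) →
        ⟪v - xs, gradient f (c b)⟫ - ⟪v - xs, gradient f (c a)⟫ ≤ K * (b - a) := by
      intro a b ha hb hab hnt
      have hsub : Set.Icc a b ⊆ Set.Icc (0:ℝ) 1 := Set.Icc_subset_Icc ha hb
      have hχd : ∀ r' : ℝ, r' ∈ Set.Icc a b →
          HasDerivAt (fun r => K * r - ⟪v - xs, gradient f (c r)⟫)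
            (K - ⟪v - xs, (fderiv ℝ (gradient f) (c r')) (xs - x)⟫) r' := by
        intro r' hr'
        have h1 : HasDerivAt (fun r : ℝ => K * r) K r' := by
          simpa using (hasDerivAt_id r').const_mul K
        exact h1.sub (hm (v - xs) r' (hsub hr'))
      have hmono : MonotoneOn (fun r => K * r - ⟪v - xs, gradient f (c r)⟫) (Set.Icc a b) := by
        apply monotoneOn_of_deriv_nonneg (convex_Icc a b)
        · exact fun r hr => (hχd r hr).continuousAt.continuousWithinAt
        · intro r hr
          rw [interior_Icc] at hr
          exact (hχd r (Set.Ioo_subset_Icc_self hr)).differentiableAt.differentiableWithinAt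
        · intro r hr
          rw [interior_Icc] at hr
          rw [(hχd r (Set.Ioo_subset_Icc_self hr)).deriv]
          have hbd := hderiv_bound r (hsub (Set.Ioo_subset_Icc_self hr)) (hnt r hr)
          linarith
      have h2 := hmono (Set.left_mem_Icc.mpr hab) (Set.right_mem_Icc.mpr hab) hab
      simp only at h2
      linarith
    have hpiece1 := hseg 0 t₀ le_rfl ht₀mem.2 ht₀mem.1 (fun r hr => hr.2.ne)
    have hpiece2 := hseg t₀ 1 ht₀mem.1 le_rfl ht₀mem.2 (fun r hr => hr.1.ne')
    have hsum : ⟪v - xs, gradient f (c 1)⟫ - ⟪v - xs, gradient f (c 0)⟫ ≤ K := by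
      linarith
    have hc1 : c 1 = xs := by simp [hcdef]
    have hc0 : c 0 = x := by simp [hcdef]
    rw [hc1, hc0] at hsum
    have e1 : ⟪gradient f xs, v - xs⟫ = ⟪v - xs, gradient f xs⟫ := real_inner_comm _ _
    have e2 : ⟪gradient f x, v - xs⟫ = ⟪v - xs, gradient f x⟫ := real_inner_comm _ _
    rw [hKdef, hBe] at hsum
    linarith [hsum, e1, e2]
  -- main inequality
  have MAIN : η * α * ‖v - xs‖ ^ 2
      ≤ 2 * η ^ 2 * CA * ‖x - xs‖ ^ 3 + 2 * (1 + η) * β * (‖x - xs‖ * ‖v - xs‖) := by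
    have hBe : ‖xs - x‖ = ‖x - xs‖ := norm_sub_rev _ _
    rw [hφ v, hφ xs] at hvp
    have hvd : v - x = (v - xs) + (xs - x) := by abel
    rw [hvd] at hvp
    have hexp : ⟪(fderiv ℝ (gradient f) x) ((v - xs) + (xs - x)), (v - xs) + (xs - x)⟫
        = ⟪(fderiv ℝ (gradient f) x) (v - xs), v - xs⟫
          + (⟪(fderiv ℝ (gradient f) x) (v - xs), xs - x⟫
            + ⟪(fderiv ℝ (gradient f) x) (xs - x), v - xs⟫)
          + ⟪(fderiv ℝ (gradient f) x) (xs - x), xs - x⟫ := by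
      simp only [map_add, inner_add_left, inner_add_right]
      ring
    have hlin : ⟪gradient f x, (v - xs) + (xs - x)⟫
        = ⟪gradient f x, v - xs⟫ + ⟪gradient f x, xs - x⟫ := inner_add_right _ _ _
    rw [hexp, hlin] at hvp
    have QD := (hHess x hx (v - xs)).1
    have CROSS : -(2 * β * (‖x - xs‖ * ‖v - xs‖))
        ≤ ⟪(fderiv ℝ (gradient f) x) (v - xs), xs - x⟫
          + ⟪(fderiv ℝ (gradient f) x) (xs - x), v - xs⟫ := by
      have hb := aux_bilin (fderiv ℝ (gradient f) x) hα hαβ (hHess x hx) (v - xs) (-(xs - x))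
      rw [map_neg] at hb
      simp only [inner_neg_left, inner_neg_right] at hb
      rw [norm_neg, hBe] at hb
      have hcomm : ‖v - xs‖ * ‖x - xs‖ = ‖x - xs‖ * ‖v - xs‖ := mul_comm _ _
      linarith [hb]
    have hcross' := mul_le_mul_of_nonneg_left CROSS (half_pos hη).le
    have hQD' := mul_le_mul_of_nonneg_left QD (half_pos hη).le
    have hGL : ⟪gradient f xs, v - xs⟫ - ⟪gradient f x, v - xs⟫
        ≤ β * (‖x - xs‖ * ‖v - xs‖) := GRADLIP
    linarith [hvp, hcross', hQD', OPT, hGL]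
  -- final algebra
  have hBn : 0 ≤ ‖x - xs‖ := norm_nonneg _
  have key : α * ‖v - xs‖ ≤ β * (3 + 2 / η) * ‖x - xs‖ + η * CA * ‖x - xs‖ ^ 2 := by
    rcases le_or_gt ‖v - xs‖ (3 * ‖x - xs‖) with hcase | hcase
    · have f1 : α * ‖v - xs‖ ≤ α * (3 * ‖x - xs‖) := mul_le_mul_of_nonneg_left hcase hα.le
      have f2 : α * (3 * ‖x - xs‖) ≤ β * (3 * ‖x - xs‖) :=
        mul_le_mul_of_nonneg_right hαβ (by positivity)
      have f3 : 0 ≤ β * (2 / η) * ‖x - xs‖ := by positivity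
      have f4 : 0 ≤ η * CA * ‖x - xs‖ ^ 2 := by positivity
      linarith [f1, f2, f3, f4]
    · have hB3 : ‖x - xs‖ ^ 3 ≤ ‖x - xs‖ ^ 2 * ‖v - xs‖ / 3 := by
        linarith [mul_le_mul_of_nonneg_left hcase.le (sq_nonneg ‖x - xs‖)]
      have h1 : η * α * ‖v - xs‖ ^ 2
          ≤ (2 * η ^ 2 * CA * ‖x - xs‖ ^ 2 / 3 + 2 * (1 + η) * β * ‖x - xs‖) * ‖v - xs‖ := by
        have := mul_le_mul_of_nonneg_left hB3 (by positivity : (0:ℝ) ≤ 2 * η ^ 2 * CA)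
        linarith [MAIN, this]
      have h2 : η * α * ‖v - xs‖
          ≤ 2 * η ^ 2 * CA * ‖x - xs‖ ^ 2 / 3 + 2 * (1 + η) * β * ‖x - xs‖ := by
        have h1' : (η * α * ‖v - xs‖) * ‖v - xs‖
            ≤ (2 * η ^ 2 * CA * ‖x - xs‖ ^ 2 / 3 + 2 * (1 + η) * β * ‖x - xs‖) * ‖v - xs‖ := by
          linarith [h1]
        exact le_of_mul_le_mul_right h1' hDpos
      have hid : η * (β * (3 + 2 / η) * ‖x - xs‖ + η * CA * ‖x - xs‖ ^ 2)
          = β * (3 * η + 2) * ‖x - xs‖ + η ^ 2 * CA * ‖x - xs‖ ^ 2 := by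
        field_simp
      have h3 : η * (α * ‖v - xs‖) ≤ η * (β * (3 + 2 / η) * ‖x - xs‖ + η * CA * ‖x - xs‖ ^ 2) := by
        rw [hid]
        have g1 : 0 ≤ η ^ 2 * CA * ‖x - xs‖ ^ 2 := by positivity
        have g2 : 0 ≤ η * (β * ‖x - xs‖) := by positivity
        linarith [h2, g1, g2]
      exact le_of_mul_le_mul_left h3 hη
  have hgoal : (β / α) * (3 + 2 / η) * ‖x - xs‖ + (η * CA / α) * ‖x - xs‖ ^ 2
      = (β * (3 + 2 / η) * ‖x - xs‖ + η * CA * ‖x - xs‖ ^ 2) / α := by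
    field_simp
  rw [hgoal, le_div_iff₀ hα]
  linarith [key]
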